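/- The q-Hahn weights W are stochastic: for any i ∈ ℤ_{≥0} and j ∈ ℤ_{≥0}, the sum over k,l ∈ ℤ_{≥0} of W_{t,s}(i,j;k,l) equals 1, where W_{t,s}(i,j;k,l) = 𝟙_{i+j=k+l} 𝟙_{i≥l} (s²/t²)^l · (s²/t²;q)_{i-l} (t²;q)_l / (s²;q)_i · (q;q)_i / ((q;q)_{i-l}(q;q)_l). -/
import Mathlib


/-- The q-Pochhammer symbol `(x;q)_n = ∏_{i=1}^n (1 - x q^{i-1})`. -/
noncomputable def qp (q x : ℂ) (n : ℕ) : ℂ := ∏ r ∈ Finset.range n, (1 - x * q ^ r)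

/-- The q-Hahn vertex weight `W_{t,s}(i,j;k,l)`. -/
noncomputable def Wqh (q t s : ℂ) (i j k l : ℕ) : ℂ :=
  if i + j = k + l ∧ l ≤ i then
    (s ^ 2 / t ^ 2) ^ l * qp q (s ^ 2 / t ^ 2) (i - l) * qp q (t ^ 2) l / qp q (s ^ 2) i *
      (qp q q i / (qp q q (i - l) * qp q q l))
  else 0

/-- Division-free Gaussian binomial coefficient. -/
noncomputable def G (q : ℂ) : ℕ → ℕ → ℂ
  | 0, 0 => 1
  | 0, _+1 => 0
  | _+1, 0 => 1
  | i+1, l+1 => G q i (l+1) + q ^ (i - l) * G q i l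

lemma qp_succ (q x : ℂ) (n : ℕ) : qp q x (n+1) = qp q x n * (1 - x * q ^ n) := by
  simp [qp, Finset.prod_range_succ]

lemma qp_zero (q x : ℂ) : qp q x 0 = 1 := by simp [qp]

lemma qp_q_ne_zero (q : ℂ) (hq : ∀ n : ℕ, 1 ≤ n → q ^ n ≠ 1) (n : ℕ) :
    qp q q n ≠ 0 := by
  rw [qp, Finset.prod_ne_zero_iff]
  intro r _
  have : q * q ^ r = q ^ (r + 1) := by ring
  rw [this]
  intro h
  exact hq (r+1) (by omega) (sub_eq_zero.mp h).symm

lemma G_zero_of_lt (q : ℂ) : ∀ i l : ℕ, i < l → G q i l = 0 := by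
  intro i
  induction i with
  | zero => intro l hl; match l, hl with
            | l+1, _ => rfl
  | succ i ih =>
      intro l hl
      match l, hl with
      | l+1, hl =>
        show G q i (l+1) + q ^ (i - l) * G q i l = 0
        rw [ih (l+1) (by omega), ih l (by omega)]
        ring

lemma G_diag (q : ℂ) : ∀ i : ℕ, G q i i = 1 := by
  intro i
  induction i with
  | zero => rfl
  | succ i ih =>
      show G q i (i+1) + q ^ (i - i) * G q i i = 1
      rw [G_zero_of_lt q i (i+1) (by omega), ih]
      simp

lemma G_zero_right (q : ℂ) (i : ℕ) : G q i 0 = 1 := by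
  match i with
  | 0 => rfl
  | i+1 => rfl

lemma G_mul (q : ℂ) : ∀ i l : ℕ, l ≤ i →
    qp q q (i - l) * qp q q l * G q i l = qp q q i := by
  intro i
  induction i with
  | zero => intro l hl; interval_cases l; simp [qp_zero, G_diag]
  | succ i ih =>
      intro l hl
      match l with
      | 0 => simp [qp_zero, G_zero_right]
      | l+1 =>
        have hl' : l ≤ i := by omega
        show qp q q (i + 1 - (l+1)) * qp q q (l+1) *
            (G q i (l+1) + q ^ (i - l) * G q i l) = qp q q (i+1)
        have hsub : i + 1 - (l + 1) = i - l := by omega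
        rw [hsub]
        rcases Nat.eq_or_lt_of_le hl' with heq | hlt
        · subst heq
          rw [G_zero_of_lt q l (l+1) (by omega), G_diag]
          simp [qp_zero]
        · -- l + 1 ≤ i
          have h1 : i - l = (i - (l+1)) + 1 := by omega
          have key1 : qp q q (i - l) * qp q q (l+1) * G q i (l+1)
              = (1 - q * q ^ (i - (l+1))) * qp q q i := by
            rw [h1, qp_succ]
            have := ih (l+1) (by omega)
            linear_combination (1 - q * q ^ (i - (l+1))) * this
          have key2 : qp q q (i - l) * qp q q (l+1) * (q ^ (i - l) * G q i l)
              = q ^ (i - l) * (1 - q * q ^ l) * qp q q i := by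
            rw [qp_succ]
            have := ih l hl'
            linear_combination q ^ (i-l) * (1 - q * q ^ l) * this
          have hpowA : q * q ^ (i - (l+1)) = q ^ (i - l) := by
            rw [h1, pow_succ]; ring
          have hpowB : q ^ (i - l) * (q * q ^ l) = q * q ^ i := by
            have : q ^ (i - l) * q ^ l = q ^ i := by
              rw [← pow_add]; congr 1; omega
            linear_combination q * this
          rw [qp_succ q q i, qp_succ q q l] at *
          linear_combination key1 + key2 - qp q q i * hpowA - qp q q i * hpowB

/-- the q-Chu–Vandermonde identity -/
lemma key_identity (q a b : ℂ) : ∀ i : ℕ,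
    ∑ l ∈ Finset.range (i+1), a ^ l * qp q a (i - l) * qp q b l * G q i l
      = qp q (a * b) i := by
  intro i
  induction i with
  | zero => simp [qp_zero, G_diag]
  | succ i ih =>
      rw [Finset.sum_range_succ' _ (i+1)]
      have hG : ∀ l, G q (i+1) (l+1) = G q i (l+1) + q ^ (i - l) * G q i l :=
        fun l => rfl
      have step : (∑ l ∈ Finset.range (i+1),
            a ^ (l+1) * qp q a (i + 1 - (l+1)) * qp q b (l+1) * G q (i+1) (l+1))
          + a ^ 0 * qp q a (i + 1 - 0) * qp q b 0 * G q (i+1) 0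
          = (1 - a * b * q ^ i) *
            ∑ l ∈ Finset.range (i+1), a ^ l * qp q a (i - l) * qp q b l * G q i l := by
        rw [Finset.mul_sum]
        have hsplit : ∀ l ∈ Finset.range (i+1),
            a ^ (l+1) * qp q a (i + 1 - (l+1)) * qp q b (l+1) * G q (i+1) (l+1)
            = (1 - a * b * q ^ i) * (a ^ l * qp q a (i - l) * qp q b l * G q i l)
              + (a ^ (l+1) * qp q a (i + 1 - (l+1)) * qp q b (l+1) * G q i (l+1)
                - a ^ l * qp q a (i + 1 - l) * qp q b l * G q i l) := by
          intro l hl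
          have hli : l ≤ i := by simp at hl; omega
          have h1 : i + 1 - (l+1) = i - l := by omega
          have h2 : i + 1 - l = (i - l) + 1 := by omega
          rw [hG l, h1, h2, qp_succ q a (i-l), qp_succ q b l]
          have hpow : q ^ (i - l) * q ^ l = q ^ i := by
            rw [← pow_add]; congr 1; omega
          linear_combination
            (-a * (a ^ l * qp q a (i-l) * qp q b l * b * G q i l)) * hpow
        rw [Finset.sum_congr rfl hsplit, Finset.sum_add_distrib]
        have htel : ∑ l ∈ Finset.range (i+1),
            (a ^ (l+1) * qp q a (i + 1 - (l+1)) * qp q b (l+1) * G q i (l+1)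
              - a ^ l * qp q a (i + 1 - l) * qp q b l * G q i l)
            = a ^ (i+1) * qp q a (i + 1 - (i+1)) * qp q b (i+1) * G q i (i+1)
              - a ^ 0 * qp q a (i + 1 - 0) * qp q b 0 * G q i 0 := by
          exact Finset.sum_range_sub
            (fun l => a ^ l * qp q a (i + 1 - l) * qp q b l * G q i l) (i+1)
        rw [htel, G_zero_of_lt q i (i+1) (by omega), G_zero_right, G_zero_right]
        ring
      rw [step, ih, qp_succ]
      ring

theorem stmt2 (q s t : ℂ) (ht : t ≠ 0) (hq : ∀ n : ℕ, 1 ≤ n → q ^ n ≠ 1)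
    (i j : ℕ) (hs : qp q (s ^ 2) i ≠ 0) :
    (∑' (k : ℕ) (l : ℕ), Wqh q t s i j k l) = 1 := by
  have hinner : ∀ k : ℕ, (∑' l : ℕ, Wqh q t s i j k l) = Wqh q t s i j k (i + j - k) := by
    intro k
    apply tsum_eq_single
    intro l hl
    rw [Wqh, if_neg]
    rintro ⟨h1, -⟩
    exact hl (by omega)
  rw [tsum_congr hinner]
  rw [tsum_eq_sum (s := Finset.range (i+j+1)) (f := fun k => Wqh q t s i j k (i + j - k))
    (fun k hk => by
      simp only [Wqh]
      rw [if_neg]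
      rintro ⟨h1, -⟩
      simp only [Finset.mem_range] at hk
      omega)]
  rw [← Finset.sum_range_reflect]
  have hre : ∀ m ∈ Finset.range (i+j+1),
      Wqh q t s i j (i + j + 1 - 1 - m) (i + j - (i + j + 1 - 1 - m))
        = Wqh q t s i j (i + j - m) m := by
    intro m hm
    simp only [Finset.mem_range] at hm
    congr 1 <;> omega
  rw [Finset.sum_congr rfl hre]
  have hrestrict : ∑ m ∈ Finset.range (i+j+1), Wqh q t s i j (i+j-m) m
      = ∑ m ∈ Finset.range (i+1), Wqh q t s i j (i+j-m) m := by
    symm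
    apply Finset.sum_subset
    · intro m hm
      simp only [Finset.mem_range] at *
      omega
    · intro m _ hm'
      simp only [Finset.mem_range] at hm'
      rw [Wqh, if_neg]
      rintro ⟨-, h2⟩
      omega
  rw [hrestrict]
  have hterm : ∀ m ∈ Finset.range (i+1), Wqh q t s i j (i+j-m) m
      = ((s^2/t^2) ^ m * qp q (s^2/t^2) (i-m) * qp q (t^2) m * G q i m) / qp q (s^2) i := by
    intro m hm
    simp only [Finset.mem_range] at hm
    have hmi : m ≤ i := by omega
    rw [Wqh, if_pos ⟨by omega, hmi⟩, ← G_mul q i m hmi]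
    have hne1 := qp_q_ne_zero q hq (i-m)
    have hne2 := qp_q_ne_zero q hq m
    field_simp
  rw [Finset.sum_congr rfl hterm, ← Finset.sum_div, key_identity q (s^2/t^2) (t^2) i]
  rw [div_mul_cancel₀ _ (pow_ne_zero 2 ht)]
  exact div_self hs
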